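/- Let Q be a probability transition kernel on a measurable space 𝒳 with invariant probability measure π, and let g ∈ L^2(π) be an ℝ^d-valued function such that ∫ |T_n(g, Q)|² dπ ≤ C(g,Q)·n for some constant C(g,Q) < ∞ and all n ≥ 1. Then for any β > 1 there is a constant Γ, depending only on β, such that π({x : max_{1 ≤ j ≤ n} |T_j(g, Q)(x)| > λ}) ≤ Γ C(g,Q) n^β / λ² for all λ > 0 and all n ≥ 1. -/

import Mathlib

open MeasureTheory ProbabilityTheory Filter
open scoped ENNReal NNReal

noncomputable section

/-- The Markov transition operator: `Qh(x) = ∫ h(y) Q(x; dy)`. -/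
def kerOp {𝒳 : Type*} [MeasurableSpace 𝒳] {E : Type*} [NormedAddCommGroup E]
    [NormedSpace ℝ E] (Q : Kernel 𝒳 𝒳) (h : 𝒳 → E) : 𝒳 → E :=
  fun x => ∫ y, h y ∂(Q x)

/-- `T_n(g, Q) = ∑_{k=0}^{n-1} Q^k g`. -/
def Tres {𝒳 : Type*} [MeasurableSpace 𝒳] {E : Type*} [NormedAddCommGroup E]
    [NormedSpace ℝ E] (Q : Kernel 𝒳 𝒳) (g : 𝒳 → E) (n : ℕ) : 𝒳 → E :=
  fun x => ∑ k ∈ Finset.range n, (kerOp Q)^[k] g x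

section Aux
variable {𝒳 : Type*} [MeasurableSpace 𝒳] {E : Type*} [NormedAddCommGroup E] [NormedSpace ℝ E]

lemma kerOp_sm (Q : Kernel 𝒳 𝒳) [IsSFiniteKernel Q] {h : 𝒳 → E} (hm : StronglyMeasurable h) :
    StronglyMeasurable (kerOp Q h) := by
  have h1 : StronglyMeasurable (Function.uncurry fun (_ : 𝒳) (y : 𝒳) => h y) :=
    hm.comp_measurable measurable_snd
  exact h1.integral_kernel_prod_right

lemma lintegral_ennnorm_le_sqrt {μ : Measure 𝒳} [IsProbabilityMeasure μ] {h : 𝒳 → E}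
    (hm : AEMeasurable (fun y => (‖h y‖₊ : ℝ≥0∞)) μ) :
    ∫⁻ y, (‖h y‖₊ : ℝ≥0∞) ∂μ ≤ (∫⁻ y, (‖h y‖₊ : ℝ≥0∞) ^ 2 ∂μ) ^ (1/2 : ℝ) := by
  have hconj : (2 : ℝ).HolderConjugate 2 := Real.HolderConjugate.two_two
  have H := ENNReal.lintegral_mul_le_Lp_mul_Lq μ hconj hm
    (aemeasurable_const : AEMeasurable (fun _ => (1:ℝ≥0∞)) μ)
  have hr : ∀ x : ℝ≥0∞, x ^ (2:ℝ) = x ^ 2 := fun x => by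
    rw [show (2:ℝ) = ((2:ℕ):ℝ) by norm_num, ENNReal.rpow_natCast]
  simp only [Pi.mul_apply, mul_one, ENNReal.one_rpow, lintegral_one, measure_univ,
    ENNReal.one_rpow, hr] at H
  simpa using H

lemma sq_ennnorm_integral_le {μ : Measure 𝒳} [IsProbabilityMeasure μ] {h : 𝒳 → E}
    (hm : AEMeasurable (fun y => (‖h y‖₊ : ℝ≥0∞)) μ) :
    (‖∫ y, h y ∂μ‖₊ : ℝ≥0∞) ^ 2 ≤ ∫⁻ y, (‖h y‖₊ : ℝ≥0∞) ^ 2 ∂μ := by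
  have h1 : (‖∫ y, h y ∂μ‖₊ : ℝ≥0∞) ≤ ∫⁻ y, ‖h y‖₊ ∂μ :=
    enorm_integral_le_lintegral_enorm _
  have h2 := lintegral_ennnorm_le_sqrt hm
  calc (‖∫ y, h y ∂μ‖₊ : ℝ≥0∞) ^ 2 ≤ ((∫⁻ y, (‖h y‖₊ : ℝ≥0∞) ^ 2 ∂μ) ^ (1/2 : ℝ)) ^ 2 :=
        pow_le_pow_left' (h1.trans h2) 2
    _ = ∫⁻ y, (‖h y‖₊ : ℝ≥0∞) ^ 2 ∂μ := by
        rw [← ENNReal.rpow_natCast (_ ^ (1/2:ℝ)), ← ENNReal.rpow_mul]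
        norm_num

set_option linter.unusedSectionVars false

variable (Q : Kernel 𝒳 𝒳) [IsMarkovKernel Q] (π : Measure 𝒳) [IsProbabilityMeasure π]

/-- `L²`-contraction of the transition operator. -/
lemma J_kerOp_le (hinv : Kernel.Invariant Q π) {h : 𝒳 → E} (hm : StronglyMeasurable h) :
    ∫⁻ x, (‖kerOp Q h x‖₊ : ℝ≥0∞) ^ 2 ∂π ≤ ∫⁻ x, (‖h x‖₊ : ℝ≥0∞) ^ 2 ∂π := by
  have hme : Measurable fun y => (‖h y‖₊ : ℝ≥0∞) := hm.enorm
  calc ∫⁻ x, (‖kerOp Q h x‖₊ : ℝ≥0∞) ^ 2 ∂π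
      ≤ ∫⁻ x, ∫⁻ y, (‖h y‖₊ : ℝ≥0∞) ^ 2 ∂(Q x) ∂π :=
        lintegral_mono fun x => sq_ennnorm_integral_le hme.aemeasurable
    _ = ∫⁻ y, (‖h y‖₊ : ℝ≥0∞) ^ 2 ∂(π.bind Q) :=
        (MeasureTheory.Measure.lintegral_bind Q.measurable.aemeasurable (hme.pow_const 2).aemeasurable).symm
    _ = ∫⁻ x, (‖h x‖₊ : ℝ≥0∞) ^ 2 ∂π := by rw [hinv]

/-- a.e. congruence for the transition operator. -/
lemma kerOp_congr_ae (hinv : Kernel.Invariant Q π) {f h : 𝒳 → E}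
    (hfm : StronglyMeasurable f) (hhm : StronglyMeasurable h) (hfh : f =ᵐ[π] h) :
    kerOp Q f =ᵐ[π] kerOp Q h := by
  have hN : MeasurableSet {y | f y = h y} := hfm.measurableSet_eq_fun hhm
  have h0 : π {y | f y = h y}ᶜ = 0 := hfh
  have hbind : (π.bind Q) {y | f y = h y}ᶜ = 0 := by rw [hinv]; exact h0
  rw [Measure.bind_apply hN.compl Q.measurable.aemeasurable] at hbind
  have hae := (lintegral_eq_zero_iff (Q.measurable_coe hN.compl)).1 hbind
  filter_upwards [hae] with x hx
  exact integral_congr_ae (ae_iff.2 (by simpa [Set.compl_setOf] using hx))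

/-- a.e. integrability of an `L¹` function with respect to the kernel measures. -/
lemma ae_integrable_kernel (hinv : Kernel.Invariant Q π) {f : 𝒳 → E}
    (hfm : StronglyMeasurable f) (hf1 : ∫⁻ x, (‖f x‖₊ : ℝ≥0∞) ∂π < ∞) :
    ∀ᵐ x ∂π, Integrable f (Q x) := by
  have hme : Measurable fun y => (‖f y‖₊ : ℝ≥0∞) := hfm.enorm
  have hb : ∫⁻ x, ∫⁻ y, (‖f y‖₊ : ℝ≥0∞) ∂(Q x) ∂π < ∞ := by
    rw [← MeasureTheory.Measure.lintegral_bind Q.measurable.aemeasurable hme.aemeasurable, hinv]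
    exact hf1
  have hae : ∀ᵐ x ∂π, ∫⁻ y, (‖f y‖₊ : ℝ≥0∞) ∂(Q x) < ∞ :=
    ae_lt_top (Measurable.lintegral_kernel_prod_right (hme.comp measurable_snd)) hb.ne
  filter_upwards [hae] with x hx
  exact ⟨hfm.aestronglyMeasurable, hx⟩

lemma l1_of_J {h : 𝒳 → E} (hm : StronglyMeasurable h)
    (hJ : ∫⁻ x, (‖h x‖₊ : ℝ≥0∞) ^ 2 ∂π < ∞) : ∫⁻ x, (‖h x‖₊ : ℝ≥0∞) ∂π < ∞ :=
  lt_of_le_of_lt (lintegral_ennnorm_le_sqrt hm.enorm.aemeasurable)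
    (ENNReal.rpow_lt_top_of_nonneg (by norm_num) hJ.ne)

lemma kerOp_sum_ae {ι : Type*} (hinv : Kernel.Invariant Q π) (s : Finset ι) (F : ι → 𝒳 → E)
    (hsm : ∀ j ∈ s, StronglyMeasurable (F j))
    (h1 : ∀ j ∈ s, ∫⁻ x, (‖F j x‖₊ : ℝ≥0∞) ∂π < ∞) :
    kerOp Q (fun x => ∑ j ∈ s, F j x) =ᵐ[π] fun x => ∑ j ∈ s, kerOp Q (F j) x := by
  have hae : ∀ᵐ x ∂π, ∀ j ∈ s, Integrable (F j) (Q x) := by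
    rw [Filter.eventually_all_finset]
    exact fun j hj => ae_integrable_kernel Q π hinv (hsm j hj) (h1 j hj)
  filter_upwards [hae] with x hx
  exact integral_finset_sum s hx

lemma iter_sm {h : 𝒳 → E} (hm : StronglyMeasurable h) (i : ℕ) :
    StronglyMeasurable ((kerOp Q)^[i] h) := by
  induction i with
  | zero => exact hm
  | succ i ih => rw [Function.iterate_succ_apply']; exact kerOp_sm Q ih

lemma iter_J_le (hinv : Kernel.Invariant Q π) {h : 𝒳 → E} (hm : StronglyMeasurable h) (i : ℕ) :
    ∫⁻ x, (‖(kerOp Q)^[i] h x‖₊ : ℝ≥0∞) ^ 2 ∂π ≤ ∫⁻ x, (‖h x‖₊ : ℝ≥0∞) ^ 2 ∂π := by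
  induction i with
  | zero => simp
  | succ i ih =>
    rw [Function.iterate_succ_apply']
    exact (J_kerOp_le Q π hinv (iter_sm Q hm i)).trans ih

lemma iter_congr_ae (hinv : Kernel.Invariant Q π) {f h : 𝒳 → E}
    (hf : StronglyMeasurable f) (hh : StronglyMeasurable h) (hfh : f =ᵐ[π] h) (i : ℕ) :
    (kerOp Q)^[i] f =ᵐ[π] (kerOp Q)^[i] h := by
  induction i with
  | zero => exact hfh
  | succ i ih =>
    rw [Function.iterate_succ_apply', Function.iterate_succ_apply']
    exact kerOp_congr_ae Q π hinv (iter_sm Q hf i) (iter_sm Q hh i) ih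

lemma iter_sum_ae {ι : Type*} (hinv : Kernel.Invariant Q π) (i : ℕ) :
    ∀ (F : ι → 𝒳 → E) (s : Finset ι), (∀ j ∈ s, StronglyMeasurable (F j)) →
    (∀ j ∈ s, ∫⁻ x, (‖F j x‖₊ : ℝ≥0∞) ^ 2 ∂π < ∞) →
    (kerOp Q)^[i] (fun x => ∑ j ∈ s, F j x) =ᵐ[π] fun x => ∑ j ∈ s, (kerOp Q)^[i] (F j) x := by
  induction i with
  | zero => intro F s _ _; rfl
  | succ i ih =>
    intro F s hsm hJ
    rw [Function.iterate_succ_apply]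
    have step1 : kerOp Q (fun x => ∑ j ∈ s, F j x) =ᵐ[π] fun x => ∑ j ∈ s, kerOp Q (F j) x :=
      kerOp_sum_ae Q π hinv s F hsm fun j hj => l1_of_J π (hsm j hj) (hJ j hj)
    have hsmL : StronglyMeasurable (kerOp Q fun x => ∑ j ∈ s, F j x) :=
      kerOp_sm Q (Finset.stronglyMeasurable_fun_sum s hsm)
    have hsmR : StronglyMeasurable (fun x => ∑ j ∈ s, kerOp Q (F j) x) :=
      Finset.stronglyMeasurable_fun_sum s fun j hj => kerOp_sm Q (hsm j hj)
    refine ((iter_congr_ae Q π hinv hsmL hsmR step1 i).trans ?_)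
    have := ih (fun j => kerOp Q (F j)) s (fun j hj => kerOp_sm Q (hsm j hj))
      (fun j hj => (J_kerOp_le Q π hinv (hsm j hj)).trans_lt (hJ j hj))
    simpa using this

end Aux

section Aux2
set_option linter.unusedSectionVars false
variable {𝒳 : Type*} [MeasurableSpace 𝒳] {E : Type*} [NormedAddCommGroup E] [NormedSpace ℝ E]
  (Q : Kernel 𝒳 𝒳) [IsMarkovKernel Q] (π : Measure 𝒳) [IsProbabilityMeasure π]

lemma Tres_sm {g : 𝒳 → E} (hg : StronglyMeasurable g) (m : ℕ) :
    StronglyMeasurable (Tres Q g m) :=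
  Finset.stronglyMeasurable_fun_sum _ fun k _ => iter_sm Q hg k

lemma J_Tres_diff (hinv : Kernel.Invariant Q π) {g : 𝒳 → E} (hg : StronglyMeasurable g)
    (hJg : ∫⁻ x, (‖g x‖₊ : ℝ≥0∞) ^ 2 ∂π < ∞) (i m : ℕ) :
    ∫⁻ x, (‖Tres Q g (i + m) x - Tres Q g i x‖₊ : ℝ≥0∞) ^ 2 ∂π ≤
      ∫⁻ x, (‖Tres Q g m x‖₊ : ℝ≥0∞) ^ 2 ∂π := by
  have hpt : ∀ x, Tres Q g (i + m) x - Tres Q g i x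
      = ∑ j ∈ Finset.range m, (kerOp Q)^[i + j] g x := by
    intro x
    have h := Finset.sum_range_add (fun k => (kerOp Q)^[k] g x) i m
    simp only [Tres, h]
    exact add_sub_cancel_left _ _
  have h1 := iter_sum_ae Q π hinv i (fun j => (kerOp Q)^[j] g) (Finset.range m)
    (fun j _ => iter_sm Q hg j) (fun j _ => (iter_J_le Q π hinv hg j).trans_lt hJg)
  have hae : (kerOp Q)^[i] (Tres Q g m) =ᵐ[π]
      fun x => ∑ j ∈ Finset.range m, (kerOp Q)^[i + j] g x := by
    refine h1.trans (Filter.EventuallyEq.of_eq ?_)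
    funext x
    exact Finset.sum_congr rfl fun j _ => by rw [Function.iterate_add_apply]
  calc ∫⁻ x, (‖Tres Q g (i + m) x - Tres Q g i x‖₊ : ℝ≥0∞) ^ 2 ∂π
      = ∫⁻ x, (‖(kerOp Q)^[i] (Tres Q g m) x‖₊ : ℝ≥0∞) ^ 2 ∂π := by
        refine lintegral_congr_ae ?_
        filter_upwards [hae] with x hx
        rw [hpt x, hx]
    _ ≤ ∫⁻ x, (‖Tres Q g m x‖₊ : ℝ≥0∞) ^ 2 ∂π := iter_J_le Q π hinv (Tres_sm Q hg m) i

lemma chebyshev {f : 𝒳 → E} (hf : StronglyMeasurable f) {δ : ℝ} (hδ : 0 < δ) :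
    π {x | δ < ‖f x‖} ≤ (∫⁻ x, (‖f x‖₊ : ℝ≥0∞) ^ 2 ∂π) / ENNReal.ofReal (δ ^ 2) := by
  have hA : MeasurableSet {x | δ < ‖f x‖} :=
    measurableSet_lt measurable_const hf.norm.measurable
  rw [ENNReal.le_div_iff_mul_le (Or.inl (by simp [hδ, pow_pos, hδ.ne'] : ENNReal.ofReal (δ ^ 2) ≠ 0))
    (Or.inl ENNReal.ofReal_ne_top)]
  calc π {x | δ < ‖f x‖} * ENNReal.ofReal (δ ^ 2)
      = ∫⁻ _ in {x | δ < ‖f x‖}, ENNReal.ofReal (δ ^ 2) ∂π := by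
        rw [setLIntegral_const]; ring
    _ ≤ ∫⁻ x in {x | δ < ‖f x‖}, (‖f x‖₊ : ℝ≥0∞) ^ 2 ∂π := by
        refine setLIntegral_mono (hf.enorm.pow_const 2) fun x hx => ?_
        have hx' : δ ^ 2 ≤ ‖f x‖ ^ 2 := by
          have hlt : δ < ‖f x‖ := hx
          nlinarith
        have := ENNReal.ofReal_le_ofReal hx'
        rwa [ENNReal.ofReal_pow (norm_nonneg _), ofReal_norm, enorm_eq_nnnorm] at this
    _ ≤ ∫⁻ x, (‖f x‖₊ : ℝ≥0∞) ^ 2 ∂π := setLIntegral_le_lintegral _ _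

end Aux2

section Chain
variable {E : Type*} [NormedAddCommGroup E]

/-- Dyadic chaining: if all aligned dyadic block increments are small, `v j` is small. -/
lemma chain_bound (v : ℕ → E) (hv0 : v 0 = 0) {δ : ℝ} (hδ : 0 ≤ δ) (n j K : ℕ)
    (hj : j ≤ n) (hjK : j < 2 ^ (K + 1))
    (Hblock : ∀ k ≤ K, ∀ m : ℕ, (m + 1) * 2 ^ k ≤ n →
      ‖v ((m + 1) * 2 ^ k) - v (m * 2 ^ k)‖ ≤ δ) :
    ‖v j‖ ≤ ((K : ℝ) + 1) * δ := by
  set p : ℕ → ℕ := fun k => 2 ^ k * (j / 2 ^ k) with hp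
  have hp0 : p 0 = j := by simp [hp]
  have hpK : p (K + 1) = 0 := by
    have : j / 2 ^ (K + 1) = 0 := Nat.div_eq_of_lt hjK
    simp [hp, this]
  have htel : ∑ k ∈ Finset.range (K + 1), (v (p k) - v (p (k + 1))) = v j := by
    rw [Finset.sum_range_sub' fun k => v (p k)]
    rw [hp0, hpK, hv0, sub_zero]
  have hterm : ∀ k ∈ Finset.range (K + 1), ‖v (p k) - v (p (k + 1))‖ ≤ δ := by
    intro k hk
    have hkK : k ≤ K := Nat.lt_succ_iff.mp (Finset.mem_range.mp hk)
    have hdiv : j / 2 ^ k / 2 = j / 2 ^ (k + 1) := by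
      rw [Nat.div_div_eq_div_mul, pow_succ]
    rcases Nat.even_or_odd (j / 2 ^ k) with he | ho
    · obtain ⟨c, hc⟩ := he
      have hc2 : j / 2 ^ k = 2 * c := by omega
      have h3 : j / 2 ^ (k + 1) = c := by omega
      have : p k = p (k + 1) := by
        simp only [hp, pow_succ]
        rw [show j / (2 ^ k * 2) = c from by rw [← pow_succ]; exact h3, hc2]
        ring
      rw [this, sub_self, norm_zero]
      exact hδ
    · obtain ⟨c, hc⟩ := ho
      have hdivc : j / 2 ^ (k + 1) = c := by omega
      set m : ℕ := 2 * c with hm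
      have hpk1 : p (k + 1) = m * 2 ^ k := by
        simp only [hp, pow_succ]
        rw [show j / (2 ^ k * 2) = c from by rw [← pow_succ]; exact hdivc, hm]
        ring
      have hpk : p k = (m + 1) * 2 ^ k := by
        simp only [hp]
        rw [hc, hm]
        ring
      have hle : (m + 1) * 2 ^ k ≤ n := by
        calc (m + 1) * 2 ^ k = p k := hpk.symm
          _ ≤ j := by simpa [hp, mul_comm] using Nat.div_mul_le_self j (2 ^ k)
          _ ≤ n := hj
      rw [hpk, hpk1]
      exact Hblock k hkK m hle
  calc ‖v j‖ = ‖∑ k ∈ Finset.range (K + 1), (v (p k) - v (p (k + 1)))‖ := by rw [htel]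
    _ ≤ ∑ k ∈ Finset.range (K + 1), ‖v (p k) - v (p (k + 1))‖ := norm_sum_le _ _
    _ ≤ ∑ _k ∈ Finset.range (K + 1), δ := Finset.sum_le_sum hterm
    _ = ((K : ℝ) + 1) * δ := by
        rw [Finset.sum_const, Finset.card_range, nsmul_eq_mul]
        push_cast
        ring

end Chain

/-- The growth constant: `(log₂ n + 1)³ ≤ Γ n^(β-1)`. -/
lemma gamma_bound (β : ℝ) (hβ : 1 < β) : ∃ Γ : ℝ, 0 ≤ Γ ∧ ∀ n : ℕ, 1 ≤ n →
    ((Nat.log 2 n : ℝ) + 1) ^ 3 ≤ Γ * (n : ℝ) ^ (β - 1) := by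
  set s : ℝ := (β - 1) / 3 with hs
  have hs0 : 0 < s := by rw [hs]; linarith
  refine ⟨(2 / s + 1) ^ 3, by positivity, fun n hn => ?_⟩
  have hn1 : (1 : ℝ) ≤ (n : ℝ) := by exact_mod_cast hn
  have hn0 : (0 : ℝ) < (n : ℝ) := by linarith
  have hlogn : 0 ≤ Real.log n := Real.log_nonneg hn1
  set L : ℕ := Nat.log 2 n with hL
  have h2L : ((2 : ℕ) : ℝ) ^ L ≤ (n : ℝ) := by
    exact_mod_cast Nat.pow_log_le_self 2 (by omega)
  have hLlog : (L : ℝ) * Real.log 2 ≤ Real.log n := by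
    rw [← Real.log_pow]
    exact Real.log_le_log (by positivity) (by exact_mod_cast h2L)
  have hL2 : (L : ℝ) ≤ 2 * Real.log n := by
    nlinarith [Real.log_two_gt_d9, Nat.cast_nonneg (α := ℝ) L]
  have hns1 : 1 ≤ (n : ℝ) ^ s := by
    rw [show (1:ℝ) = (1:ℝ) ^ s by simp]
    exact Real.rpow_le_rpow zero_le_one hn1 hs0.le
  have hlog_le : Real.log n ≤ (n : ℝ) ^ s / s := by
    have h1 : s * Real.log n = Real.log ((n : ℝ) ^ s) := (Real.log_rpow hn0 s).symm
    have h2 : Real.log ((n : ℝ) ^ s) ≤ (n : ℝ) ^ s - 1 :=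
      Real.log_le_sub_one_of_pos (by positivity)
    rw [div_eq_mul_inv, ← ge_iff_le, ge_iff_le, le_mul_inv_iff₀ hs0, mul_comm]
    nlinarith
  have hkey : (L : ℝ) + 1 ≤ (2 / s + 1) * (n : ℝ) ^ s := by
    have : (L : ℝ) ≤ 2 * ((n : ℝ) ^ s / s) := by linarith
    rw [add_mul, one_mul]
    have h2 : 2 * ((n:ℝ) ^ s / s) = 2 / s * (n:ℝ) ^ s := by ring
    linarith [h2 ▸ this]
  calc ((L : ℝ) + 1) ^ 3 ≤ ((2 / s + 1) * (n : ℝ) ^ s) ^ 3 := by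
        have h0 : (0:ℝ) ≤ (L : ℝ) + 1 := by positivity
        exact pow_le_pow_left₀ h0 hkey 3
    _ = (2 / s + 1) ^ 3 * ((n : ℝ) ^ s) ^ 3 := by ring
    _ = (2 / s + 1) ^ 3 * (n : ℝ) ^ (β - 1) := by
        rw [← Real.rpow_natCast ((n:ℝ) ^ s) 3, ← Real.rpow_mul hn0.le]
        norm_num [hs]

section Aux3
set_option linter.unusedSectionVars false
variable {𝒳 : Type*} [MeasurableSpace 𝒳] {E : Type*} [NormedAddCommGroup E] [NormedSpace ℝ E]
  (π : Measure 𝒳)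

lemma J_lt_top_iff {f : 𝒳 → E} :
    ∫⁻ x, (‖f x‖₊ : ℝ≥0∞) ^ 2 ∂π < ∞ ↔ eLpNorm f 2 π < ∞ := by
  rw [eLpNorm_eq_lintegral_rpow_enorm_toReal two_ne_zero ENNReal.ofNat_ne_top]
  have hr : ∀ x : ℝ≥0∞, x ^ ((2 : ℝ≥0∞).toReal) = x ^ 2 := fun x => by
    rw [ENNReal.toReal_ofNat, show (2:ℝ) = ((2:ℕ):ℝ) by norm_num, ENNReal.rpow_natCast]
  simp only [hr, enorm_eq_nnnorm]
  rw [ENNReal.rpow_lt_top_iff_of_pos (by rw [ENNReal.toReal_ofNat]; norm_num)]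

lemma J_eq_ofReal_integral {f : 𝒳 → E} (hf : StronglyMeasurable f)
    (hJ : ∫⁻ x, (‖f x‖₊ : ℝ≥0∞) ^ 2 ∂π < ∞) :
    ENNReal.ofReal (∫ x, ‖f x‖ ^ 2 ∂π) = ∫⁻ x, (‖f x‖₊ : ℝ≥0∞) ^ 2 ∂π := by
  have heq : ∀ x, ENNReal.ofReal (‖f x‖ ^ 2) = (‖f x‖₊ : ℝ≥0∞) ^ 2 := fun x => by
    rw [ENNReal.ofReal_pow (norm_nonneg _), ofReal_norm, enorm_eq_nnnorm]
  have hint : Integrable (fun x => ‖f x‖ ^ 2) π := by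
    refine ⟨(hf.norm.measurable.pow_const 2).aestronglyMeasurable, ?_⟩
    show ∫⁻ x, (‖(‖f x‖ ^ 2 : ℝ)‖₊ : ℝ≥0∞) ∂π < ∞
    have : ∀ x, (‖(‖f x‖ ^ 2 : ℝ)‖₊ : ℝ≥0∞) = (‖f x‖₊ : ℝ≥0∞) ^ 2 := fun x => by
      rw [← enorm_eq_nnnorm, Real.enorm_eq_ofReal (by positivity), heq]
    simpa only [this] using hJ
  rw [MeasureTheory.ofReal_integral_eq_lintegral_ofReal hint
    (Filter.Eventually.of_forall fun x => by positivity)]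
  exact lintegral_congr fun x => heq x

end Aux3

/-- Corollary to the maximal inequality: for every `β > 1` there is a
constant `Γ` depending only on `β` such that, whenever `∫ |T_n(g,Q)|² dπ ≤ C n` for all
`n ≥ 1`, one has `π(max_{1 ≤ j ≤ n} |T_j(g,Q)| > λ) ≤ Γ C n^β / λ²` for all `λ > 0`, `n ≥ 1`. -/
theorem stmt1 (β : ℝ) (hβ : 1 < β) :
    ∃ Γ : ℝ, ∀ (𝒳 : Type*) (_ : MeasurableSpace 𝒳) (d : ℕ)
      (Q : Kernel 𝒳 𝒳), IsMarkovKernel Q →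
      ∀ (π : Measure 𝒳), IsProbabilityMeasure π → Kernel.Invariant Q π →
      ∀ (g : 𝒳 → EuclideanSpace ℝ (Fin d)), StronglyMeasurable g → MemLp g 2 π →
      ∀ C : ℝ, (∀ n : ℕ, 1 ≤ n → ∫ x, ‖Tres Q g n x‖ ^ 2 ∂π ≤ C * n) →
      ∀ n : ℕ, 1 ≤ n → ∀ lam : ℝ, 0 < lam →
      π {x | ∃ j, 1 ≤ j ∧ j ≤ n ∧ lam < ‖Tres Q g j x‖} ≤
        ENNReal.ofReal (Γ * C * (n : ℝ) ^ β / lam ^ 2) := by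
  obtain ⟨Γ, hΓ0, hΓ⟩ := gamma_bound β hβ
  refine ⟨Γ, ?_⟩
  intro 𝒳 m𝒳 d Q hQ π hπ hinv g hgsm hg2 C hC n hn lam hlam
  haveI := hQ; haveI := hπ
  have hn0 : (0 : ℝ) < (n : ℝ) := by exact_mod_cast hn
  have hJg : ∫⁻ x, (‖g x‖₊ : ℝ≥0∞) ^ 2 ∂π < ∞ := (J_lt_top_iff π).mpr hg2.2
  have hC0 : 0 ≤ C := by
    have h1 := hC 1 le_rfl
    have h2 : (0:ℝ) ≤ ∫ x, ‖Tres Q g 1 x‖ ^ 2 ∂π := integral_nonneg fun x => by positivity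
    simpa using h2.trans h1
  -- finiteness and moment bounds for `Tres`
  have hJT : ∀ m : ℕ, ∫⁻ x, (‖Tres Q g m x‖₊ : ℝ≥0∞) ^ 2 ∂π < ∞ := by
    intro m
    rw [J_lt_top_iff]
    have hTeq : Tres Q g m = ∑ k ∈ Finset.range m, (kerOp Q)^[k] g := by
      funext x; simp [Tres]
    rw [hTeq]
    refine lt_of_le_of_lt (eLpNorm_sum_le
      (fun k _ => (iter_sm Q hgsm k).aestronglyMeasurable) (by norm_num)) ?_
    refine ENNReal.sum_lt_top.mpr fun k _ => ?_
    exact (J_lt_top_iff π).mp ((iter_J_le Q π hinv hgsm k).trans_lt hJg)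
  have hmom : ∀ m : ℕ, 1 ≤ m →
      ∫⁻ x, (‖Tres Q g m x‖₊ : ℝ≥0∞) ^ 2 ∂π ≤ ENNReal.ofReal (C * m) := by
    intro m hm
    rw [← J_eq_ofReal_integral π (Tres_sm Q hgsm m) (hJT m)]
    exact ENNReal.ofReal_le_ofReal (hC m hm)
  set K : ℕ := Nat.log 2 n with hK
  set δ : ℝ := lam / ((K : ℝ) + 1) with hδdef
  have hδ : 0 < δ := by positivity
  set B : ℕ → ℕ → Set 𝒳 := fun k m =>
    {x | δ < ‖Tres Q g ((m + 1) * 2 ^ k) x - Tres Q g (m * 2 ^ k) x‖} with hB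
  -- per-block bound
  have hblock : ∀ k m : ℕ,
      π (B k m) ≤ ENNReal.ofReal (C * 2 ^ k) / ENNReal.ofReal (δ ^ 2) := by
    intro k m
    have hdsm : StronglyMeasurable
        (fun x => Tres Q g ((m + 1) * 2 ^ k) x - Tres Q g (m * 2 ^ k) x) :=
      (Tres_sm Q hgsm _).sub (Tres_sm Q hgsm _)
    refine (chebyshev π hdsm hδ).trans ?_
    refine ENNReal.div_le_div_right ?_ _
    have h1 := J_Tres_diff Q π hinv hgsm hJg (m * 2 ^ k) (2 ^ k)
    rw [show m * 2 ^ k + 2 ^ k = (m + 1) * 2 ^ k by ring] at h1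
    refine h1.trans ((hmom (2 ^ k) Nat.one_le_two_pow).trans ?_)
    push_cast
    exact le_rfl
  -- chaining inclusion
  have hsub : {x | ∃ j, 1 ≤ j ∧ j ≤ n ∧ lam < ‖Tres Q g j x‖} ⊆
      ⋃ k ∈ Finset.range (K + 1), ⋃ m ∈ Finset.range (n / 2 ^ k), B k m := by
    intro x hx
    obtain ⟨j, hj1, hjn, hjlam⟩ := hx
    by_contra hcon
    simp only [Set.mem_iUnion, not_exists, Finset.mem_range, exists_prop, not_and] at hcon
    have Hb : ∀ k ≤ K, ∀ m : ℕ, (m + 1) * 2 ^ k ≤ n →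
        ‖Tres Q g ((m + 1) * 2 ^ k) x - Tres Q g (m * 2 ^ k) x‖ ≤ δ := by
      intro k hk m hmn
      have hmlt : m < n / 2 ^ k := by
        have h2 := (Nat.le_div_iff_mul_le (pow_pos two_pos k)).mpr hmn
        omega
      have hnotB := hcon k (by omega) m hmlt
      simpa [hB, not_lt] using hnotB
    have hjK : j < 2 ^ (K + 1) :=
      lt_of_le_of_lt hjn (Nat.lt_pow_succ_log_self (by norm_num) n)
    have hv := chain_bound (fun i => Tres Q g i x) (by simp [Tres]) hδ.le n j K hjn hjK Hb
    have heq : ((K : ℝ) + 1) * δ = lam := by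
      rw [hδdef]; field_simp
    rw [heq] at hv
    exact absurd hjlam (not_lt.mpr hv)
  -- assembling the measure bound
  calc π {x | ∃ j, 1 ≤ j ∧ j ≤ n ∧ lam < ‖Tres Q g j x‖}
      ≤ π (⋃ k ∈ Finset.range (K + 1), ⋃ m ∈ Finset.range (n / 2 ^ k), B k m) :=
        measure_mono hsub
    _ ≤ ∑ k ∈ Finset.range (K + 1), π (⋃ m ∈ Finset.range (n / 2 ^ k), B k m) :=
        measure_biUnion_finset_le _ _
    _ ≤ ∑ k ∈ Finset.range (K + 1), ∑ m ∈ Finset.range (n / 2 ^ k), π (B k m) :=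
        Finset.sum_le_sum fun k _ => measure_biUnion_finset_le _ _
    _ ≤ ∑ k ∈ Finset.range (K + 1),
          ENNReal.ofReal (C * n) / ENNReal.ofReal (δ ^ 2) := by
        refine Finset.sum_le_sum fun k _ => ?_
        refine (Finset.sum_le_sum fun m _ => hblock k m).trans ?_
        rw [Finset.sum_const, Finset.card_range, nsmul_eq_mul, ← mul_div_assoc]
        refine ENNReal.div_le_div_right ?_ _
        rw [← ENNReal.ofReal_natCast, ← ENNReal.ofReal_mul (Nat.cast_nonneg _)]
        refine ENNReal.ofReal_le_ofReal ?_
        have hfloor : ((n / 2 ^ k : ℕ) : ℝ) * (2 : ℝ) ^ k ≤ (n : ℝ) := by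
          exact_mod_cast Nat.div_mul_le_self n (2 ^ k)
        have hd0 : (0:ℝ) ≤ ((n / 2 ^ k : ℕ) : ℝ) := Nat.cast_nonneg _
        nlinarith
    _ = ((K : ℕ) + 1 : ℕ) * (ENNReal.ofReal (C * n) / ENNReal.ofReal (δ ^ 2)) := by
        rw [Finset.sum_const, Finset.card_range, nsmul_eq_mul]
    _ ≤ ENNReal.ofReal (Γ * C * (n : ℝ) ^ β / lam ^ 2) := by
        rw [mul_div_assoc, ← ENNReal.ofReal_natCast, ← ENNReal.ofReal_div_of_pos (by positivity),
          ← ENNReal.ofReal_mul (Nat.cast_nonneg _)]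
        refine ENNReal.ofReal_le_ofReal ?_
        have hδ2 : δ ^ 2 = lam ^ 2 / ((K : ℝ) + 1) ^ 2 := by rw [hδdef, div_pow]
        have hlhs : ((K + 1 : ℕ) : ℝ) * (C * ↑n / δ ^ 2)
            = ((K : ℝ) + 1) ^ 3 * (C * n) / lam ^ 2 := by
          rw [hδ2]
          push_cast
          field_simp
        rw [hlhs]
        have hpow : (n : ℝ) ^ (β - 1) * (n : ℝ) = (n : ℝ) ^ β := by
          rw [← Real.rpow_add_one hn0.ne']
          norm_num
        have hG := hΓ n hn
        rw [← hK] at hG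
        have hCn : (0:ℝ) ≤ C * n := by positivity
        have hnum : ((K:ℝ) + 1) ^ 3 * (C * n) ≤ Γ * C * (n:ℝ) ^ β := by
          calc ((K:ℝ) + 1) ^ 3 * (C * n) ≤ Γ * (n:ℝ) ^ (β - 1) * (C * n) :=
                mul_le_mul_of_nonneg_right hG hCn
            _ = Γ * C * ((n:ℝ) ^ (β - 1) * n) := by ring
            _ = Γ * C * (n:ℝ) ^ β := by rw [hpow]
        rw [← mul_div_assoc]
        gcongr
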